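/- Let I = ((x_1 x_n)^{w_1}, ..., (x_{n-1} x_n)^{w_{n-1}}) ⊆ S = K[x_1,...,x_n] be the edge ideal of an edge-weighted star graph with w_1 ≥ w_2 ≥ ... ≥ w_{n-1} ≥ 1. Then for any t ≥ 2, the colon ideal (I^t : (x_{n-1} x_n)^{w_{n-1}}) equals I^{t-1}. -/

import Mathlib

open MvPolynomial Pointwise

private lemma monomial_image_mul {K : Type} [Field K] {σ : Type} (A B : Set (σ →₀ ℕ)) :
    ((fun s => (monomial s (1 : K))) '' A) * ((fun s => monomial s (1 : K)) '' B)
      = (fun s => monomial s (1 : K)) '' (A + B) := by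
  ext p
  simp only [Set.mem_mul, Set.mem_image, Set.mem_add]
  constructor
  · rintro ⟨_, ⟨a, ha, rfl⟩, _, ⟨b, hb, rfl⟩, rfl⟩
    exact ⟨a + b, ⟨a, ha, b, hb, rfl⟩, by simp [monomial_mul]⟩
  · rintro ⟨_, ⟨a, ha, b, hb, rfl⟩, rfl⟩
    exact ⟨monomial a 1, ⟨a, ha, rfl⟩, monomial b 1, ⟨b, hb, rfl⟩, by simp [monomial_mul]⟩

private lemma span_monomial_pow {K : Type} [Field K] {σ ι : Type} (e : ι → (σ →₀ ℕ)) :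
    ∀ t : ℕ, (Ideal.span ((fun s => (monomial s (1 : K))) '' Set.range e)) ^ t
      = Ideal.span ((fun s => monomial s (1 : K)) ''
          {d | ∃ T : Multiset ι, Multiset.card T = t ∧ d = (T.map e).sum})
  | 0 => by
      rw [pow_zero, Ideal.one_eq_top]
      have h : {d : σ →₀ ℕ | ∃ T : Multiset ι, Multiset.card T = 0 ∧ d = (T.map e).sum}
          = {0} := by
        ext d
        simp [Multiset.card_eq_zero]
      rw [h]
      have h2 : ((fun s => monomial s (1 : K)) '' ({0} : Set (σ →₀ ℕ))) = {1} := by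
        simp
      rw [h2, Ideal.span_singleton_one]
  | (t + 1) => by
      have hset : ({d : σ →₀ ℕ | ∃ T : Multiset ι, Multiset.card T = t ∧ d = (T.map e).sum}
            + Set.range e)
          = {d : σ →₀ ℕ | ∃ T : Multiset ι, Multiset.card T = t + 1 ∧ d = (T.map e).sum} := by
        ext d
        simp only [Set.mem_add, Set.mem_setOf_eq, Set.mem_range]
        constructor
        · rintro ⟨a, ⟨T, hT, rfl⟩, b, ⟨i, rfl⟩, rfl⟩
          refine ⟨i ::ₘ T, by simp [hT], by simp [add_comm]⟩
        · rintro ⟨T, hT, rfl⟩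
          obtain ⟨i, hi⟩ := Multiset.card_pos_iff_exists_mem.mp (by rw [hT]; omega)
          obtain ⟨T', rfl⟩ := Multiset.exists_cons_of_mem hi
          refine ⟨(T'.map e).sum, ⟨T', by simpa using hT, rfl⟩, e i, ⟨i, rfl⟩, by
            simp [add_comm]⟩
      rw [pow_succ, span_monomial_pow e t, Ideal.span_mul_span', monomial_image_mul, hset]

private lemma key_combinatorial {m : ℕ} (w : Fin (m + 1) → ℕ)
    (hmono : ∀ i j : Fin (m + 1), i ≤ j → w j ≤ w i)
    (E : Fin (m + 1) → (Fin (m + 2) →₀ ℕ))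
    (hE : ∀ i, E i = Finsupp.single i.castSucc (w i)
        + Finsupp.single (Fin.last (m + 1)) (w i))
    (μ : Fin (m + 2) →₀ ℕ) (T : Multiset (Fin (m + 1))) (hT : T ≠ 0)
    (hle : (T.map E).sum ≤ μ + E (Fin.last m)) :
    ∃ T' : Multiset (Fin (m + 1)),
      Multiset.card T' = Multiset.card T - 1 ∧ (T'.map E).sum ≤ μ := by
  have hcoord : ∀ (S : Multiset (Fin (m + 1))) (k : Fin (m + 2)),
      ((S.map E).sum) k = (S.map fun i => E i k).sum := by
    intro S k
    rw [show ((S.map E).sum) k = (Finsupp.applyAddHom k) (S.map E).sum from rfl,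
      map_multiset_sum, Multiset.map_map]
    rfl
  have hEn : ∀ i : Fin (m + 1), (E i) (Fin.last (m + 1)) = w i := by
    intro i
    rw [hE]
    simp [Finsupp.single_apply, (Fin.castSucc_lt_last i).ne]
  have hEc : ∀ (i k' : Fin (m + 1)),
      (E i) k'.castSucc = if i = k' then w i else 0 := by
    intro i k'
    rw [hE]
    simp [Finsupp.single_apply, Fin.castSucc_inj, (Fin.castSucc_lt_last k').ne']
  have hle' : ∀ k, (T.map fun i => E i k).sum ≤ μ k + (E (Fin.last m)) k := by
    intro k
    have := Finsupp.le_def.mp hle k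
    rwa [hcoord, Finsupp.add_apply] at this
  by_cases hmem : Fin.last m ∈ T
  · obtain ⟨T', rfl⟩ := Multiset.exists_cons_of_mem hmem
    refine ⟨T', by simp, ?_⟩
    refine Finsupp.le_def.mpr fun k => ?_
    have h1 := hle' k
    rw [Multiset.map_cons, Multiset.sum_cons] at h1
    rw [hcoord]
    omega
  · obtain ⟨j, hj⟩ := Multiset.exists_mem_of_ne_zero hT
    obtain ⟨T', rfl⟩ := Multiset.exists_cons_of_mem hj
    refine ⟨T', by simp, ?_⟩
    refine Finsupp.le_def.mpr fun k => ?_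
    rw [hcoord]
    refine Fin.lastCases ?_ ?_ k
    · -- k = last (m+1)
      have h1 := hle' (Fin.last (m + 1))
      rw [Multiset.map_cons, Multiset.sum_cons] at h1
      simp only [hEn] at h1 ⊢
      have hwj : w (Fin.last m) ≤ w j := hmono j (Fin.last m) (Fin.le_last j)
      omega
    · intro k'
      by_cases hk' : k' = Fin.last m
      · subst hk'
        have hz : (T'.map fun i => E i (Fin.last m).castSucc).sum = 0 := by
          apply Multiset.sum_eq_zero
          intro x hx
          obtain ⟨i, hi, rfl⟩ := Multiset.mem_map.mp hx
          rw [hEc]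
          have : i ≠ Fin.last m := by
            rintro rfl
            exact hmem (Multiset.mem_cons_of_mem hi)
          simp [this]
        rw [hz]
        exact Nat.zero_le _
      · have h1 := hle' k'.castSucc
        rw [Multiset.map_cons, Multiset.sum_cons] at h1
        rw [hEc (Fin.last m) k', if_neg (by simpa [eq_comm] using hk')] at h1
        omega

/-- for the weighted star edge ideal with `w_1 ≥ ⋯ ≥ w_{n-1} ≥ 1`,
`(I^t : (x_{n-1} x_n)^{w_{n-1}}) = I^{t-1}` for all `t ≥ 2`.
Here the star has `m+2` vertices with center `x_{m+2}`. -/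
theorem star_colon_power (K : Type) [Field K] (m : ℕ) (w : Fin (m + 1) → ℕ)
    (hw : ∀ i, 1 ≤ w i) (hmono : ∀ i j : Fin (m + 1), i ≤ j → w j ≤ w i)
    (t : ℕ) (ht : 2 ≤ t)
    (I : Ideal (MvPolynomial (Fin (m + 2)) K))
    (hI : I = Ideal.span (Set.range fun i : Fin (m + 1) =>
      (X i.castSucc * X (Fin.last (m + 1))) ^ w i)) :
    (I ^ t).colon ((Ideal.span
        {(X (Fin.last m).castSucc * X (Fin.last (m + 1))) ^ w (Fin.last m)} :
          Ideal (MvPolynomial (Fin (m + 2)) K)) : Set (MvPolynomial (Fin (m + 2)) K)) =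
      I ^ (t - 1) := by
  set E : Fin (m + 1) → (Fin (m + 2) →₀ ℕ) := fun i =>
    Finsupp.single i.castSucc (w i) + Finsupp.single (Fin.last (m + 1)) (w i) with hE
  have hgen : ∀ i : Fin (m + 1),
      ((X i.castSucc * X (Fin.last (m + 1)) : MvPolynomial (Fin (m + 2)) K)) ^ w i
        = monomial (E i) 1 := by
    intro i
    rw [X, X, monomial_mul, monomial_pow, hE]
    simp [smul_add, Finsupp.smul_single]
  have hI' : I = Ideal.span ((fun s => monomial s (1 : K)) '' Set.range E) := by
    rw [hI, ← Set.range_comp]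
    congr 1
    ext p
    simp only [Set.mem_range, Function.comp, hgen]
  apply le_antisymm
  · -- hard direction
    intro f hf
    rw [Ideal.mem_colon_span_singleton, hgen, hI', span_monomial_pow,
      mem_ideal_span_monomial_image] at hf
    rw [hI', span_monomial_pow, mem_ideal_span_monomial_image]
    intro μ hμ
    have hsup : μ + E (Fin.last m) ∈ (f * monomial (E (Fin.last m)) (1 : K)).support := by
      rw [mem_support_iff, coeff_mul_monomial, mul_one]
      exact mem_support_iff.mp hμ
    obtain ⟨si, ⟨T, hTcard, rfl⟩, hsi⟩ := hf _ hsup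
    have hTne : T ≠ 0 := by
      intro h
      rw [h] at hTcard
      simp at hTcard
      omega
    obtain ⟨T', hT'card, hT'le⟩ := key_combinatorial w hmono E (fun _ => rfl) μ T hTne hsi
    exact ⟨(T'.map E).sum, ⟨T', by omega, rfl⟩, hT'le⟩
  · -- easy direction
    intro f hf
    rw [Ideal.mem_colon_span_singleton]
    have hg : (X (Fin.last m).castSucc * X (Fin.last (m + 1)) :
        MvPolynomial (Fin (m + 2)) K) ^ w (Fin.last m) ∈ I := by
      rw [hI]
      exact Ideal.subset_span (Set.mem_range_self _)
    have := Ideal.mul_mem_mul hf hg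
    rwa [← pow_succ, Nat.sub_add_cancel (by omega)] at this
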